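/- If the family Z^ε(T) = ε Z(T/ε) satisfies the weak large deviation principle in ℝ^d with rate functions I_T, then the quasipotential I(q,q') := inf_{T>0} I_T(q,q') admits the representation I(q,q') = inf_{T>0} T · I_1(q/T, q'/T) for all q,q' ∈ ℝ^d. -/

import Mathlib

open MeasureTheory Filter Set Metric
open scoped ENNReal Topology Pointwise

noncomputable section

namespace GreenLDP

/-- The state space `ℝ^d` with its Euclidean norm. -/
abbrev Sp (d : ℕ) := EuclideanSpace ℝ (Fin d)

/-- Path space: trajectories indexed by (real) time. -/
abbrev Path (d : ℕ) := ℝ → Sp d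

variable {d : ℕ}

/-- A path is right continuous with left limits at all nonnegative times. -/
def CadlagOn (φ : Path d) : Prop :=
  ∀ t : ℝ, 0 ≤ t → ContinuousWithinAt φ (Ici t) t ∧
    (0 < t → ∃ L : Sp d, Tendsto φ (𝓝[<] t) (𝓝 L))

/-- Basic setup: a time-homogeneous Markov process `Z` on an unbounded subset
`E ⊆ ℝ^d`, described through the family of its path-space laws `P z`
(the law of the process started at `z ∈ E`), whose sample paths are right
continuous with left limits. -/
structure MarkovSetup (d : ℕ) where
  /-- the (unbounded) state space `E ⊆ ℝ^d` -/
  E : Set (Sp d)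
  /-- `P z` is the law on path space of the process started at `z`;
  `P z S = ℙ_z(Z(·) ∈ S)` -/
  P : Sp d → Measure (Path d)
  prob : ∀ z, IsProbabilityMeasure (P z)
  unbounded : ¬ Bornology.IsBounded E
  start : ∀ z ∈ E, P z {ω | ω 0 = z} = 1
  stays : ∀ z ∈ E, ∀ᵐ ω ∂ P z, ∀ t : ℝ, 0 ≤ t → ω t ∈ E
  cadlag : ∀ z ∈ E, ∀ᵐ ω ∂ P z, CadlagOn ω
  /-- (time-homogeneous) Markov property: conditionally on the position at
  time `s`, the law of the shifted path is that of the process restarted there. -/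
  markov : ∀ z ∈ E, ∀ s : ℝ, 0 ≤ s → ∀ F : Path d → ℝ≥0∞, Measurable F →
    ∫⁻ ω, F (fun t => ω (s + t)) ∂ P z = ∫⁻ ω, ∫⁻ ω', F ω' ∂ P (ω s) ∂ P z

/-- Green's function `G(z,B) = ∫₀^∞ ℙ_z(Z(t) ∈ B) dt`. -/
def green (P : Sp d → Measure (Path d)) (z : Sp d) (B : Set (Sp d)) : ℝ≥0∞ :=
  ∫⁻ t in Ioi (0 : ℝ), P z {ω | ω t ∈ B}

/-- First exit time `τ_R = inf {t ≥ 0 : |Z(t)| ≥ R}` from the open ball of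
radius `R` (equal to `∞` if the process never exits). -/
def exitTime (ω : Path d) (R : ℝ) : ℝ≥0∞ :=
  ⨅ t ∈ {t : ℝ | 0 ≤ t ∧ R ≤ ‖ω t‖}, ENNReal.ofReal t

/-- Truncated Green's function `G_R(z,B) = ∫₀^∞ ℙ_z(Z(t) ∈ B, τ_R > t) dt`. -/
def greenTrunc (P : Sp d → Measure (Path d)) (R : ℝ) (z : Sp d) (B : Set (Sp d)) : ℝ≥0∞ :=
  ∫⁻ t in Ioi (0 : ℝ), P z {ω | ω t ∈ B ∧ ENNReal.ofReal t < exitTime ω R}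

/-- The scaled path `Z^ε(t) = ε Z(t/ε)`. -/
def scaledPath (ε : ℝ) (ω : Path d) : Path d := fun t => ε • ω (t / ε)

/-- The set `{z ∈ E : |εz − q| < δ}` of admissible starting points. -/
def nearScaled (E : Set (Sp d)) (ε : ℝ) (q : Sp d) (δ : ℝ) : Set (Sp d) :=
  {z ∈ E | ‖ε • z - q‖ < δ}

/-- The set `{z ∈ E : |z − nq| < δn}` of admissible starting points. -/
def nearE (E : Set (Sp d)) (q : Sp d) (n δ : ℝ) : Set (Sp d) :=
  {z ∈ E | ‖z - n • q‖ < δ * n}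

/-- Large deviation lower bound for the scaled variables `Z^ε(T) = εZ(T/ε)` over
open sets:  `lim_{δ→0} liminf_{ε→0} ε log inf_{z∈E,|εz−q|<δ} ℙ_z(Z^ε(T) ∈ O)
≥ −inf_{q'∈O} I(q,q')`.  (Since the inner quantity is monotone in `δ`, the limit
as `δ → 0⁺` is the supremum over `δ > 0`.) -/
def LDPLower (E : Set (Sp d)) (P : Sp d → Measure (Path d)) (T : ℝ)
    (I : Sp d → Sp d → EReal) : Prop :=
  ∀ (q : Sp d) (O : Set (Sp d)), IsOpen O →
    -(⨅ q' ∈ O, I q q') ≤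
      ⨆ δ : {δ : ℝ // 0 < δ},
        liminf (fun ε : ℝ =>
          (ε : EReal) * ENNReal.log
            (⨅ z ∈ nearScaled E ε q δ.1, P z {ω | scaledPath ε ω T ∈ O}))
          (𝓝[>] (0 : ℝ))

/-- Large deviation upper bound for the scaled variables `Z^ε(T) = εZ(T/ε)` over
compact sets:  `lim_{δ→0} limsup_{ε→0} ε log sup_{z∈E,|εz−q|<δ} ℙ_z(Z^ε(T) ∈ V)
≤ −inf_{q'∈V} I(q,q')`. -/
def LDPUpperCompact (E : Set (Sp d)) (P : Sp d → Measure (Path d)) (T : ℝ)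
    (I : Sp d → Sp d → EReal) : Prop :=
  ∀ (q : Sp d) (V : Set (Sp d)), IsCompact V →
    (⨅ δ : {δ : ℝ // 0 < δ},
      limsup (fun ε : ℝ =>
        (ε : EReal) * ENNReal.log
          (⨆ z ∈ nearScaled E ε q δ.1, P z {ω | scaledPath ε ω T ∈ V}))
        (𝓝[>] (0 : ℝ)))
      ≤ -(⨅ q' ∈ V, I q q')

/-- Large deviation upper bound over closed sets (for the full LDP). -/
def LDPUpperClosed (E : Set (Sp d)) (P : Sp d → Measure (Path d)) (T : ℝ)
    (I : Sp d → Sp d → EReal) : Prop :=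
  ∀ (q : Sp d) (V : Set (Sp d)), IsClosed V →
    (⨅ δ : {δ : ℝ // 0 < δ},
      limsup (fun ε : ℝ =>
        (ε : EReal) * ENNReal.log
          (⨆ z ∈ nearScaled E ε q δ.1, P z {ω | scaledPath ε ω T ∈ V}))
        (𝓝[>] (0 : ℝ)))
      ≤ -(⨅ q' ∈ V, I q q')

/-- The weak large deviation principle in `ℝ^d` for `Z^ε(T)` with a lower
semicontinuous rate function `I_T : ℝ^d × ℝ^d → [0,∞)`. -/
def WeakLDP (E : Set (Sp d)) (P : Sp d → Measure (Path d)) (T : ℝ)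
    (I : Sp d → Sp d → ℝ) : Prop :=
  LowerSemicontinuous (fun p : Sp d × Sp d => I p.1 p.2) ∧
  (∀ q q' : Sp d, 0 ≤ I q q') ∧
  LDPLower E P T (fun q q' => ((I q q' : ℝ) : EReal)) ∧
  LDPUpperCompact E P T (fun q q' => ((I q q' : ℝ) : EReal))

/-- Hypothesis (H1): for every `T > 0` the scaled variables `Z^ε(T)` satisfy the
weak large deviation principle with rate function `I_T`. -/
def H1 (E : Set (Sp d)) (P : Sp d → Measure (Path d))
    (I : ℝ → Sp d → Sp d → ℝ) : Prop :=
  ∀ T : ℝ, 0 < T → WeakLDP E P T (I T)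

/-- The jump generating function
`φ̂(a) = sup_{z∈E} sup_{t∈[0,1]} 𝔼_z exp(a·(Z(t)−z))` of hypothesis (H2). -/
def mgf (E : Set (Sp d)) (P : Sp d → Measure (Path d)) (a : Sp d) : ℝ≥0∞ :=
  ⨆ z ∈ E, ⨆ t ∈ Icc (0:ℝ) 1,
    ∫⁻ ω, ENNReal.ofReal (Real.exp ((inner ℝ a (ω t - z) : ℝ))) ∂ P z

/-- Hypothesis (H2): `φ̂(a) < ∞` for every `a ∈ ℝ^d`. -/
def H2 (E : Set (Sp d)) (P : Sp d → Measure (Path d)) : Prop :=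
  ∀ a : Sp d, mgf E P a < ⊤

/-- Hypothesis (H3), communication condition with constant `θ > 0` : there is a
positive function `σ` on `E` with `σ(z)/|z| → 0` as `|z| → ∞` such that for all
`z, z' ∈ E` the probability, starting from `z`, of ever hitting the open ball
`B(z', σ(z'))` is at least `exp(−θ|z'−z|)`. -/
def H3 (E : Set (Sp d)) (P : Sp d → Measure (Path d)) (θ : ℝ) : Prop :=
  0 < θ ∧ ∃ σ : Sp d → ℝ, (∀ z ∈ E, 0 < σ z) ∧
    (∀ η : ℝ, 0 < η → ∃ M : ℝ, ∀ z ∈ E, M ≤ ‖z‖ → σ z < η * ‖z‖) ∧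
    ∀ z ∈ E, ∀ z' ∈ E,
      ENNReal.ofReal (Real.exp (-θ * ‖z' - z‖)) ≤
        P z {ω | ∃ t : ℝ, 0 ≤ t ∧ ω t ∈ ball z' (σ z')}

/-- The set `𝓡` of all possible limits `lim_{ε→0} ε z_ε` with `z_ε ∈ E`. -/
def RSet (E : Set (Sp d)) : Set (Sp d) :=
  {q | ∃ zf : ℝ → Sp d, (∀ ε : ℝ, zf ε ∈ E) ∧
    Tendsto (fun ε : ℝ => ε • zf ε) (𝓝[>] (0:ℝ)) (𝓝 q)}

/-- The quasipotential `I(q,q') = inf_{T>0} I_T(q,q')`. -/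
def quasipot (I : ℝ → Sp d → Sp d → ℝ) (q q' : Sp d) : ℝ :=
  ⨅ T : {T : ℝ // 0 < T}, I T.1 q q'

-- `Î(q,q') = I(q,q')` for `q ≠ q'` and `Î(q,q) = 0`.
open Classical in
def quasipotHat (I : ℝ → Sp d → Sp d → ℝ) (q q' : Sp d) : ℝ :=
  if q = q' then 0 else quasipot I q q'

/-- The Skorohod distance on `D([0,T],ℝ^d)` :
`d(φ,ψ) = inf_λ max(sup_{t∈[0,T]}|λ(t)−t|, sup_{t∈[0,T]}|φ(λ(t))−ψ(t)|)`,
the infimum being over increasing bijections `λ` of `[0,T]`. -/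
def skorohodDist (T : ℝ) (φ ψ : Path d) : ℝ :=
  sInf {r : ℝ | 0 ≤ r ∧ ∃ lam : ℝ → ℝ, StrictMonoOn lam (Icc 0 T) ∧
    lam '' Icc 0 T = Icc 0 T ∧
    ∀ t ∈ Icc 0 T, |lam t - t| ≤ r ∧ ‖φ (lam t) - ψ t‖ ≤ r}

/-- The Skorohod topology on paths over the time interval `[0,T]`, generated by
the balls of the Skorohod distance. -/
def skorohodTop (d : ℕ) (T : ℝ) : TopologicalSpace (Path d) :=
  TopologicalSpace.generateFrom
    {s | ∃ (φ : Path d) (r : ℝ), 0 < r ∧ s = {ψ | skorohodDist T φ ψ < r}}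

/-- A good rate function on `D([0,T],ℝ^d)` : for every `c ≥ 0` and every compact
`V ⊆ ℝ^d` the set `{φ : φ(0) ∈ V, I_{[0,T]}(φ) ≤ c}` is compact for the
Skorohod topology. -/
def GoodRate (T : ℝ) (J : Path d → ℝ≥0∞) : Prop :=
  ∀ c : ℝ, 0 ≤ c → ∀ V : Set (Sp d), IsCompact V →
    @IsCompact _ (skorohodTop d T) {φ : Path d | φ 0 ∈ V ∧ J φ ≤ ENNReal.ofReal c}

/-- Sample path large deviation lower bound on `D([0,T],ℝ^d)`. -/
def SPLDLower (E : Set (Sp d)) (P : Sp d → Measure (Path d)) (T : ℝ)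
    (J : Path d → ℝ≥0∞) : Prop :=
  ∀ (z : Sp d) (𝓞 : Set (Path d)), @IsOpen _ (skorohodTop d T) 𝓞 →
    -(⨅ φ ∈ {φ ∈ 𝓞 | φ 0 = z}, (J φ : EReal)) ≤
      ⨆ δ : {δ : ℝ // 0 < δ},
        liminf (fun ε : ℝ =>
          (ε : EReal) * ENNReal.log
            (⨅ z' ∈ nearScaled E ε z δ.1, P z' {ω | scaledPath ε ω ∈ 𝓞}))
          (𝓝[>] (0 : ℝ))

/-- Sample path large deviation upper bound on `D([0,T],ℝ^d)`. -/
def SPLDUpper (E : Set (Sp d)) (P : Sp d → Measure (Path d)) (T : ℝ)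
    (J : Path d → ℝ≥0∞) : Prop :=
  ∀ (z : Sp d) (F : Set (Path d)), @IsClosed _ (skorohodTop d T) F →
    (⨅ δ : {δ : ℝ // 0 < δ},
      limsup (fun ε : ℝ =>
        (ε : EReal) * ENNReal.log
          (⨆ z' ∈ nearScaled E ε z δ.1, P z' {ω | scaledPath ε ω ∈ F}))
        (𝓝[>] (0 : ℝ)))
      ≤ -(⨅ φ ∈ {φ ∈ F | φ 0 = z}, (J φ : EReal))

/-- The sample path large deviation principle on `D([0,T],ℝ^d)` with a good rate
function `J = I_{[0,T]}`. -/
def SPLD (E : Set (Sp d)) (P : Sp d → Measure (Path d)) (T : ℝ)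
    (J : Path d → ℝ≥0∞) : Prop :=
  GoodRate T J ∧ SPLDLower E P T J ∧ SPLDUpper E P T J

/-- Hypothesis (H1'): for every `T > 0` the scaled processes satisfy the sample
path large deviation principle with good rate function `I_{[0,T]} = Ipath T`,
and `I_T(q,q')` is the infimum of `I_{[0,T]}(φ)` over paths with `φ(0) = q`,
`φ(T) = q'`. -/
def H1' (E : Set (Sp d)) (P : Sp d → Measure (Path d))
    (Ipath : ℝ → Path d → ℝ≥0∞) (I : ℝ → Sp d → Sp d → ℝ) : Prop :=
  ∀ T : ℝ, 0 < T → SPLD E P T (Ipath T) ∧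
    ∀ q q' : Sp d,
      (ENNReal.ofReal (I T q q') : ℝ≥0∞) =
        ⨅ φ ∈ {φ : Path d | φ 0 = q ∧ φ T = q'}, Ipath T φ

/-- `lim_{δ→0} liminf_{n→∞} (1/n) log inf_{z∈E,|z−nq|<δn} G(z, nB)`
(the limit in `δ` being a supremum, by monotonicity). -/
def greenLiminf (E : Set (Sp d)) (P : Sp d → Measure (Path d))
    (q : Sp d) (B : Set (Sp d)) : EReal :=
  ⨆ δ : {δ : ℝ // 0 < δ},
    liminf (fun n : ℕ =>
      ((((n : ℝ)⁻¹ : ℝ)) : EReal) * ENNReal.log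
        (⨅ z ∈ nearE E q n δ.1, green P z ((n : ℝ) • B))) atTop

/-- `lim_{δ→0} limsup_{n→∞} (1/n) log sup_{z∈E,|z−nq|<δn} G(z, nB)`
(the limit in `δ` being an infimum, by monotonicity). -/
def greenLimsup (E : Set (Sp d)) (P : Sp d → Measure (Path d))
    (q : Sp d) (B : Set (Sp d)) : EReal :=
  ⨅ δ : {δ : ℝ // 0 < δ},
    limsup (fun n : ℕ =>
      ((((n : ℝ)⁻¹ : ℝ)) : EReal) * ENNReal.log
        (⨆ z ∈ nearE E q n δ.1, green P z ((n : ℝ) • B))) atTop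


/-! ### Auxiliary material for Statement 7 -/

section Aux

lemma ereal_mul_cancel {T : ℝ} (hT : T ≠ 0) (x : EReal) :
    ((T⁻¹ : ℝ) : EReal) * ((T : EReal) * x) = x := by
  rw [← mul_assoc, ← EReal.coe_mul, inv_mul_cancel₀ hT, EReal.coe_one, one_mul]

lemma ereal_mul_cancel' {T : ℝ} (hT : T ≠ 0) (x : EReal) :
    (T : EReal) * (((T⁻¹ : ℝ) : EReal) * x) = x := by
  rw [← mul_assoc, ← EReal.coe_mul, mul_inv_cancel₀ hT, EReal.coe_one, one_mul]

/-- Multiplication by a positive real constant as an order isomorphism of `EReal`. -/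
def mulIso (T : ℝ) (hT : 0 < T) : EReal ≃o EReal where
  toFun x := (T : EReal) * x
  invFun x := ((T⁻¹ : ℝ) : EReal) * x
  left_inv x := ereal_mul_cancel hT.ne' x
  right_inv x := ereal_mul_cancel' hT.ne' x
  map_rel_iff' := by
    intro x y
    simp only [Equiv.coe_fn_mk]
    constructor
    · intro hxy
      have h2 := mul_le_mul_of_nonneg_left hxy
        (EReal.coe_nonneg.2 (le_of_lt (inv_pos.2 hT)) : (0:EReal) ≤ ((T⁻¹ : ℝ) : EReal))
      rwa [ereal_mul_cancel hT.ne', ereal_mul_cancel hT.ne'] at h2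
    · intro hxy
      exact mul_le_mul_of_nonneg_left hxy (EReal.coe_nonneg.2 hT.le)

@[simp] lemma mulIso_apply (T : ℝ) (hT : 0 < T) (x : EReal) :
    mulIso T hT x = (T : EReal) * x := rfl

lemma map_mul_nhdsGT {T : ℝ} (hT : 0 < T) :
    Filter.map (fun η : ℝ => T * η) (𝓝[>] (0:ℝ)) = 𝓝[>] (0:ℝ) := by
  have key : ∀ c : ℝ, 0 < c →
      Tendsto (fun η : ℝ => c * η) (𝓝[>] (0:ℝ)) (𝓝[>] (0:ℝ)) := by
    intro c hc
    rw [tendsto_nhdsWithin_iff]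
    constructor
    · have h1 : Tendsto (fun η : ℝ => c * η) (𝓝 (0:ℝ)) (𝓝 (c * 0)) :=
        (continuous_const.mul continuous_id).tendsto 0
      rw [mul_zero] at h1
      exact h1.mono_left nhdsWithin_le_nhds
    · filter_upwards [self_mem_nhdsWithin] with x hx
      exact mul_pos hc hx
  have h2 := Filter.map_mono (m := fun η : ℝ => T * η) (key T⁻¹ (inv_pos.2 hT))
  have h3 : ((fun η : ℝ => T * η) ∘ fun η : ℝ => T⁻¹ * η) = id := by
    funext x
    simp [← mul_assoc, mul_inv_cancel₀ hT.ne']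
  rw [Filter.map_map, h3, Filter.map_id] at h2
  exact le_antisymm (key T hT) h2

lemma liminf_map' {α β : Type*} [CompleteLattice β] (u : α → β) (m : α → α) (l : Filter α) :
    Filter.liminf u (Filter.map m l) = Filter.liminf (fun x => u (m x)) l := by
  show Filter.limsInf _ = Filter.limsInf _
  rw [Filter.map_map]
  rfl

lemma limsup_map' {α β : Type*} [CompleteLattice β] (u : α → β) (m : α → α) (l : Filter α) :
    Filter.limsup u (Filter.map m l) = Filter.limsup (fun x => u (m x)) l := by
  show Filter.limsSup _ = Filter.limsSup _
  rw [Filter.map_map]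
  rfl

variable {d : ℕ}

/-- The lower large-deviation quantity for the value at time `T`. -/
def SQ (E : Set (Sp d)) (P : Sp d → Measure (Path d)) (T : ℝ) (q : Sp d)
    (O : Set (Sp d)) : EReal :=
  ⨆ δ : {δ : ℝ // 0 < δ},
    liminf (fun ε : ℝ =>
      (ε : EReal) * ENNReal.log
        (⨅ z ∈ nearScaled E ε q δ.1, P z {ω | scaledPath ε ω T ∈ O}))
      (𝓝[>] (0 : ℝ))

/-- The upper large-deviation quantity for the value at time `T`. -/
def UQ (E : Set (Sp d)) (P : Sp d → Measure (Path d)) (T : ℝ) (q : Sp d)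
    (V : Set (Sp d)) : EReal :=
  ⨅ δ : {δ : ℝ // 0 < δ},
    limsup (fun ε : ℝ =>
      (ε : EReal) * ENNReal.log
        (⨆ z ∈ nearScaled E ε q δ.1, P z {ω | scaledPath ε ω T ∈ V}))
      (𝓝[>] (0 : ℝ))

lemma nearScaled_rescale (E : Set (Sp d)) {T : ℝ} (hT : 0 < T) (η δ : ℝ) (q : Sp d) :
    nearScaled E (T * η) q δ = nearScaled E η (T⁻¹ • q) (δ / T) := by
  ext z
  have h1 : (T * η) • z - q = T • (η • z - T⁻¹ • q) := by
    rw [smul_sub, smul_smul, smul_inv_smul₀ hT.ne']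
  simp only [nearScaled, Set.mem_setOf_eq, h1, norm_smul, Real.norm_eq_abs, abs_of_pos hT]
  rw [and_congr_right_iff]
  intro _
  rw [lt_div_iff₀ hT, mul_comm]

lemma event_rescale {T : ℝ} (hT : 0 < T) (η : ℝ) (O : Set (Sp d)) :
    {ω : Path d | scaledPath (T * η) ω T ∈ O} = {ω | scaledPath η ω 1 ∈ T⁻¹ • O} := by
  ext ω
  have h1 : T / (T * η) = 1 / η := by
    rcases eq_or_ne η 0 with h | h
    · simp [h]
    · field_simp
  simp only [Set.mem_setOf_eq, scaledPath]
  rw [h1, ← smul_smul, mem_smul_set_iff_inv_smul_mem₀ (inv_ne_zero hT.ne'), inv_inv]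

/-- The reparametrisation `δ ↦ δ / T` of positive reals. -/
def divEquiv (T : ℝ) (hT : 0 < T) : {δ : ℝ // 0 < δ} ≃ {δ : ℝ // 0 < δ} where
  toFun δ := ⟨δ.1 / T, div_pos δ.2 hT⟩
  invFun δ := ⟨T * δ.1, mul_pos hT δ.2⟩
  left_inv δ := Subtype.ext (by field_simp)
  right_inv δ := Subtype.ext (by field_simp)

lemma SQ_rescale (E : Set (Sp d)) (P : Sp d → Measure (Path d)) {T : ℝ} (hT : 0 < T)
    (q : Sp d) (O : Set (Sp d)) :
    SQ E P T q O = (T : EReal) * SQ E P 1 (T⁻¹ • q) (T⁻¹ • O) := by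
  set G : {δ : ℝ // 0 < δ} → ℝ → EReal := fun δ' ε =>
    (ε : EReal) * ENNReal.log
      (⨅ z ∈ nearScaled E ε (T⁻¹ • q) δ'.1, P z {ω | scaledPath ε ω 1 ∈ T⁻¹ • O}) with hG
  have claim1 : ∀ δ : {δ : ℝ // 0 < δ},
      liminf (fun ε : ℝ =>
        (ε : EReal) * ENNReal.log
          (⨅ z ∈ nearScaled E ε q δ.1, P z {ω | scaledPath ε ω T ∈ O})) (𝓝[>] (0:ℝ))
      = (T : EReal) * liminf (G (divEquiv T hT δ)) (𝓝[>] (0:ℝ)) := by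
    intro δ
    have h1 := ((mulIso T hT).liminf_apply (u := G (divEquiv T hT δ)) (f := 𝓝[>] (0:ℝ)))
    simp only [mulIso_apply] at h1
    rw [h1]
    nth_rewrite 1 [show (𝓝[>] (0:ℝ)) = Filter.map (fun η : ℝ => T * η) (𝓝[>] (0:ℝ)) from
      (map_mul_nhdsGT hT).symm]
    rw [liminf_map']
    congr 1
    funext η
    show ((T * η : ℝ) : EReal) * _ = _
    rw [nearScaled_rescale E hT η δ.1 q, event_rescale hT η O, EReal.coe_mul, mul_assoc]
    rfl
  rw [SQ, SQ]
  have h2 := (mulIso T hT).map_iSup (fun δ' : {δ : ℝ // 0 < δ} => liminf (G δ') (𝓝[>] (0:ℝ)))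
  simp only [mulIso_apply] at h2
  rw [show (⨆ δ : {δ : ℝ // 0 < δ},
      liminf (fun ε : ℝ =>
        (ε : EReal) * ENNReal.log
          (⨅ z ∈ nearScaled E ε (T⁻¹ • q) δ.1, P z {ω | scaledPath ε ω 1 ∈ T⁻¹ • O}))
        (𝓝[>] (0:ℝ))) = ⨆ δ' : {δ : ℝ // 0 < δ}, liminf (G δ') (𝓝[>] (0:ℝ)) from rfl]
  rw [h2]
  rw [← Equiv.iSup_comp
    (g := fun δ' : {δ : ℝ // 0 < δ} => (T : EReal) * liminf (G δ') (𝓝[>] (0:ℝ)))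
    (divEquiv T hT)]
  exact iSup_congr claim1

lemma UQ_rescale (E : Set (Sp d)) (P : Sp d → Measure (Path d)) {T : ℝ} (hT : 0 < T)
    (q : Sp d) (V : Set (Sp d)) :
    UQ E P T q V = (T : EReal) * UQ E P 1 (T⁻¹ • q) (T⁻¹ • V) := by
  set G : {δ : ℝ // 0 < δ} → ℝ → EReal := fun δ' ε =>
    (ε : EReal) * ENNReal.log
      (⨆ z ∈ nearScaled E ε (T⁻¹ • q) δ'.1, P z {ω | scaledPath ε ω 1 ∈ T⁻¹ • V}) with hG
  have claim1 : ∀ δ : {δ : ℝ // 0 < δ},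
      limsup (fun ε : ℝ =>
        (ε : EReal) * ENNReal.log
          (⨆ z ∈ nearScaled E ε q δ.1, P z {ω | scaledPath ε ω T ∈ V})) (𝓝[>] (0:ℝ))
      = (T : EReal) * limsup (G (divEquiv T hT δ)) (𝓝[>] (0:ℝ)) := by
    intro δ
    have h1 := ((mulIso T hT).limsup_apply (u := G (divEquiv T hT δ)) (f := 𝓝[>] (0:ℝ)))
    simp only [mulIso_apply] at h1
    rw [h1]
    nth_rewrite 1 [show (𝓝[>] (0:ℝ)) = Filter.map (fun η : ℝ => T * η) (𝓝[>] (0:ℝ)) from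
      (map_mul_nhdsGT hT).symm]
    rw [limsup_map']
    congr 1
    funext η
    show ((T * η : ℝ) : EReal) * _ = _
    rw [nearScaled_rescale E hT η δ.1 q, event_rescale hT η V, EReal.coe_mul, mul_assoc]
    rfl
  rw [UQ, UQ]
  have h2 := (mulIso T hT).map_iInf (fun δ' : {δ : ℝ // 0 < δ} => limsup (G δ') (𝓝[>] (0:ℝ)))
  simp only [mulIso_apply] at h2
  rw [show (⨅ δ : {δ : ℝ // 0 < δ},
      limsup (fun ε : ℝ =>
        (ε : EReal) * ENNReal.log
          (⨆ z ∈ nearScaled E ε (T⁻¹ • q) δ.1, P z {ω | scaledPath ε ω 1 ∈ T⁻¹ • V}))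
        (𝓝[>] (0:ℝ))) = ⨅ δ' : {δ : ℝ // 0 < δ}, limsup (G δ') (𝓝[>] (0:ℝ)) from rfl]
  rw [h2]
  rw [← Equiv.iInf_comp
    (g := fun δ' : {δ : ℝ // 0 < δ} => (T : EReal) * limsup (G δ') (𝓝[>] (0:ℝ)))
    (divEquiv T hT)]
  exact iInf_congr claim1

lemma iInf_scaled (f : Sp d → EReal) {T : ℝ} (hT : 0 < T) (O : Set (Sp d)) :
    ⨅ p ∈ T⁻¹ • O, f p = ⨅ q' ∈ O, f (T⁻¹ • q') := by
  rw [← Set.image_smul, iInf_image]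

lemma mul_biInf (f : Sp d → EReal) {T : ℝ} (hT : 0 < T) (O : Set (Sp d)) :
    (T : EReal) * ⨅ q' ∈ O, f q' = ⨅ q' ∈ O, (T : EReal) * f q' := by
  have h1 := (mulIso T hT).map_iInf (fun q' : Sp d => ⨅ _ : q' ∈ O, f q')
  rw [mulIso_apply] at h1
  rw [h1]
  refine iInf_congr fun q' => ?_
  have h2 := (mulIso T hT).map_iInf (fun _ : q' ∈ O => f q')
  simp only [mulIso_apply] at h2 ⊢
  rw [h2]

/-- Eventually (as `ε → 0⁺`) the set of admissible starting points is nonempty.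
This is a consequence of the large deviation lower bound with a *real-valued*
rate function, together with the fact that the process stays in `E`. -/
lemma lemA (M : MarkovSetup d) (I : ℝ → Sp d → Sp d → ℝ)
    (h : ∀ T : ℝ, 0 < T → WeakLDP M.E M.P T (I T)) :
    ∀ (q : Sp d) (δ : ℝ), 0 < δ →
      ∀ᶠ ε in 𝓝[>] (0:ℝ), (nearScaled M.E ε q δ).Nonempty := by
  intro q δ hδ
  obtain ⟨z₀, hz₀⟩ : M.E.Nonempty := by
    by_contra hne
    rw [Set.not_nonempty_iff_eq_empty] at hne
    exact M.unbounded (by simp [hne])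
  have hlow := (h 1 one_pos).2.2.1 0 (ball q δ) isOpen_ball
  have hfin : (⊥ : EReal) < -(⨅ q' ∈ ball q δ, ((I 1 0 q' : ℝ) : EReal)) := by
    have h1 : (⨅ q' ∈ ball q δ, ((I 1 0 q' : ℝ) : EReal)) ≤ ((I 1 0 q : ℝ) : EReal) :=
      iInf₂_le q (mem_ball_self hδ)
    calc (⊥ : EReal) < -((I 1 0 q : ℝ) : EReal) := by
          rw [← EReal.coe_neg]; exact EReal.bot_lt_coe _
      _ ≤ _ := EReal.neg_le_neg_iff.2 h1
  obtain ⟨δ', hδ'⟩ := lt_iSup_iff.1 (lt_of_lt_of_le hfin hlow)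
  have hev1 := eventually_lt_of_lt_liminf hδ'
  have hev2 : ∀ᶠ ε in 𝓝[>] (0:ℝ), ε * ‖z₀‖ < δ'.1 := by
    have htend : Tendsto (fun ε : ℝ => ε * ‖z₀‖) (𝓝[>] (0:ℝ)) (𝓝 0) := by
      have h1 : Tendsto (fun ε : ℝ => ε * ‖z₀‖) (𝓝 (0:ℝ)) (𝓝 (0 * ‖z₀‖)) :=
        (continuous_id.mul continuous_const).tendsto 0
      rw [zero_mul] at h1
      exact h1.mono_left nhdsWithin_le_nhds
    exact htend.eventually_lt_const δ'.2
  filter_upwards [hev1, hev2, self_mem_nhdsWithin] with ε hf hz hε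
  rw [Set.mem_Ioi] at hε
  have hz₀near : z₀ ∈ nearScaled M.E ε 0 δ'.1 := by
    refine ⟨hz₀, ?_⟩
    rw [sub_zero, norm_smul, Real.norm_eq_abs, abs_of_pos hε]
    exact hz
  set S := {ω : Path d | scaledPath ε ω 1 ∈ ball q δ} with hS
  have hXpos : 0 < M.P z₀ S := by
    rw [pos_iff_ne_zero]
    intro hX0
    have hinf0 : (⨅ z ∈ nearScaled M.E ε 0 δ'.1, M.P z S) = 0 :=
      le_antisymm (le_trans (iInf₂_le z₀ hz₀near) hX0.le) (by simp)
    rw [hinf0, ENNReal.log_zero, EReal.coe_mul_bot_of_pos hε] at hf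
    exact absurd hf (lt_irrefl _)
  have hstays := M.stays z₀ hz₀
  have hnonempty : (S ∩ {ω : Path d | ∀ t : ℝ, 0 ≤ t → ω t ∈ M.E}).Nonempty := by
    by_contra hemp
    rw [Set.not_nonempty_iff_eq_empty] at hemp
    have hsub : S ⊆ {ω : Path d | ¬ ∀ t : ℝ, 0 ≤ t → ω t ∈ M.E} := by
      intro ω hω hcon
      exact absurd hemp (Set.nonempty_iff_ne_empty.1 ⟨ω, hω, hcon⟩)
    have h0 : M.P z₀ {ω : Path d | ¬ ∀ t : ℝ, 0 ≤ t → ω t ∈ M.E} = 0 :=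
      MeasureTheory.ae_iff.1 hstays
    exact absurd (measure_mono_null hsub h0) hXpos.ne'
  obtain ⟨ω, hωS, hωE⟩ := hnonempty
  refine ⟨ω (1 / ε), hωE _ (by positivity), ?_⟩
  have hball : scaledPath ε ω 1 ∈ ball q δ := hωS
  rw [mem_ball, dist_eq_norm] at hball
  exact hball

/-- Given eventual nonemptiness of the admissible starting sets, the lower
large-deviation quantity over an open set is at most the upper one over any
larger set. -/
lemma SQ_le_UQ {E : Set (Sp d)} {P : Sp d → Measure (Path d)} {T : ℝ} {q : Sp d}
    {O V : Set (Sp d)}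
    (hA : ∀ (q : Sp d) (δ : ℝ), 0 < δ →
      ∀ᶠ ε in 𝓝[>] (0:ℝ), (nearScaled E ε q δ).Nonempty)
    (hOV : O ⊆ V) : SQ E P T q O ≤ UQ E P T q V := by
  rw [SQ, UQ]
  refine iSup_le fun δ₁ => le_iInf fun δ₂ => ?_
  have hmin : 0 < min δ₁.1 δ₂.1 := lt_min δ₁.2 δ₂.2
  have hev : ∀ᶠ (ε : ℝ) in 𝓝[>] (0:ℝ),
      (ε : EReal) * ENNReal.log
        (⨅ z ∈ nearScaled E ε q δ₁.1, P z {ω | scaledPath ε ω T ∈ O})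
      ≤ (ε : EReal) * ENNReal.log
        (⨆ z ∈ nearScaled E ε q δ₂.1, P z {ω | scaledPath ε ω T ∈ V}) := by
    filter_upwards [hA q _ hmin, self_mem_nhdsWithin] with ε hne hεmem
    rw [Set.mem_Ioi] at hεmem
    obtain ⟨z, hzE, hznorm⟩ := hne
    have hz1 : z ∈ nearScaled E ε q δ₁.1 :=
      ⟨hzE, lt_of_lt_of_le hznorm (min_le_left _ _)⟩
    have hz2 : z ∈ nearScaled E ε q δ₂.1 :=
      ⟨hzE, lt_of_lt_of_le hznorm (min_le_right _ _)⟩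
    have hchain : (⨅ z' ∈ nearScaled E ε q δ₁.1, P z' {ω | scaledPath ε ω T ∈ O})
        ≤ ⨆ z' ∈ nearScaled E ε q δ₂.1, P z' {ω | scaledPath ε ω T ∈ V} := by
      refine le_trans (iInf₂_le z hz1) (le_trans (measure_mono ?_)
        (le_iSup₂ (f := fun z' (_ : z' ∈ nearScaled E ε q δ₂.1) =>
          P z' {ω | scaledPath ε ω T ∈ V}) z hz2))
      exact fun ω hω => hOV hω
    exact mul_le_mul_of_nonneg_left (ENNReal.log_monotone hchain)
      (EReal.coe_nonneg.2 hεmem.le)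
  exact le_trans (liminf_le_liminf hev) liminf_le_limsup

/-- Uniqueness of weak large deviation rate functions (one inequality). -/
lemma uniq (M : MarkovSetup d) {T : ℝ} (hT : 0 < T) {J J' : Sp d → Sp d → ℝ}
    (hJ : WeakLDP M.E M.P T J) (hJ' : WeakLDP M.E M.P T J')
    (hA : ∀ (q : Sp d) (δ : ℝ), 0 < δ →
      ∀ᶠ ε in 𝓝[>] (0:ℝ), (nearScaled M.E ε q δ).Nonempty)
    (q q' : Sp d) : J q q' ≤ J' q q' := by
  have step : ∀ r : ℝ, 0 < r →
      (⨅ p ∈ closedBall q' r, ((J q p : ℝ) : EReal)) ≤ ((J' q q' : ℝ) : EReal) := by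
    intro r hr
    have hl := hJ'.2.2.1 q (ball q' r) isOpen_ball
    have hu := hJ.2.2.2 q (closedBall q' r) (isCompact_closedBall _ _)
    have hmid : SQ M.E M.P T q (ball q' r) ≤ UQ M.E M.P T q (closedBall q' r) :=
      SQ_le_UQ hA ball_subset_closedBall
    have hneg : -(⨅ p ∈ ball q' r, ((J' q p : ℝ) : EReal))
        ≤ -(⨅ p ∈ closedBall q' r, ((J q p : ℝ) : EReal)) :=
      le_trans hl (le_trans hmid hu)
    refine le_trans (EReal.neg_le_neg_iff.1 hneg) ?_
    exact iInf₂_le q' (mem_ball_self hr)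
  by_contra hlt
  push_neg at hlt
  obtain ⟨c, hc1, hc2⟩ := exists_between hlt
  have hls := hJ.1 (q, q') c hc2
  rw [Metric.eventually_nhds_iff] at hls
  obtain ⟨r, hr, hball⟩ := hls
  have hinf : ((c : ℝ) : EReal) ≤ ⨅ p ∈ closedBall q' (r/2), ((J q p : ℝ) : EReal) := by
    refine le_iInf₂ fun p hp => ?_
    have hdist : dist ((q, p) : Sp d × Sp d) (q, q') < r := by
      rw [Prod.dist_eq]
      simp only [dist_self]
      rw [mem_closedBall] at hp
      have : dist p q' < r := lt_of_le_of_lt hp (by linarith)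
      simp [this, hr]
    exact EReal.coe_le_coe_iff.2 (hball hdist).le
  have hfinal := le_trans hinf (step (r/2) (by linarith))
  rw [EReal.coe_le_coe_iff] at hfinal
  linarith

/-- Rescaling: from the weak LDP at time `1` one obtains it at time `T` with
rate function `(q,q') ↦ T ⬝ I₁(q/T, q'/T)`. -/
lemma lemB {E : Set (Sp d)} {P : Sp d → Measure (Path d)} {I₁ : Sp d → Sp d → ℝ}
    (h1 : WeakLDP E P 1 I₁) {T : ℝ} (hT : 0 < T) :
    WeakLDP E P T (fun a b => T * I₁ (T⁻¹ • a) (T⁻¹ • b)) := by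
  obtain ⟨hlsc, hnn, hlow, hup⟩ := h1
  refine ⟨?_, ?_, ?_, ?_⟩
  · -- lower semicontinuity
    have hcont : Continuous (fun p : Sp d × Sp d => ((T⁻¹ • p.1, T⁻¹ • p.2) : Sp d × Sp d)) :=
      (continuous_fst.const_smul T⁻¹ : Continuous fun p : Sp d × Sp d => T⁻¹ • p.1).prodMk
        (continuous_snd.const_smul T⁻¹ : Continuous fun p : Sp d × Sp d => T⁻¹ • p.2)
    have hlsc1 : LowerSemicontinuous
        (fun p : Sp d × Sp d => I₁ (T⁻¹ • p.1) (T⁻¹ • p.2)) :=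
      LowerSemicontinuous.comp hlsc hcont
    intro p c hc
    have hdiv : c / T < I₁ (T⁻¹ • p.1) (T⁻¹ • p.2) := by
      rw [div_lt_iff₀ hT]
      rwa [mul_comm]
    filter_upwards [hlsc1 p _ hdiv] with x hx
    rw [gt_iff_lt, div_lt_iff₀ hT, mul_comm] at hx
    exact hx
  · exact fun a b => mul_nonneg hT.le (hnn _ _)
  · -- lower bound
    intro q O hO
    show _ ≤ SQ E P T q O
    rw [SQ_rescale E P hT q O]
    have hlow1 := hlow (T⁻¹ • q) (T⁻¹ • O) (hO.smul₀ (inv_ne_zero hT.ne'))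
    have hO' : (⨅ q' ∈ O, (((T * I₁ (T⁻¹ • q) (T⁻¹ • q') : ℝ)) : EReal))
        = (T : EReal) * ⨅ p ∈ T⁻¹ • O, ((I₁ (T⁻¹ • q) p : ℝ) : EReal) := by
      rw [iInf_scaled _ hT, mul_biInf _ hT]
      refine iInf_congr fun q' => iInf_congr fun _ => ?_
      rw [← EReal.coe_mul]
    rw [hO']
    calc -(((T : EReal)) * ⨅ p ∈ T⁻¹ • O, ((I₁ (T⁻¹ • q) p : ℝ) : EReal))
        = (T : EReal) * -(⨅ p ∈ T⁻¹ • O, ((I₁ (T⁻¹ • q) p : ℝ) : EReal)) := by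
          rw [mul_comm ((T : EReal)) (-(⨅ p ∈ T⁻¹ • O, ((I₁ (T⁻¹ • q) p : ℝ) : EReal))),
            EReal.neg_mul, mul_comm]
      _ ≤ (T : EReal) * SQ E P 1 (T⁻¹ • q) (T⁻¹ • O) :=
          mul_le_mul_of_nonneg_left hlow1 (EReal.coe_nonneg.2 hT.le)
  · -- upper bound
    intro q V hV
    show UQ E P T q V ≤ _
    rw [UQ_rescale E P hT q V]
    have hup1 := hup (T⁻¹ • q) (T⁻¹ • V) (hV.smul _)
    have hV' : (⨅ q' ∈ V, (((T * I₁ (T⁻¹ • q) (T⁻¹ • q') : ℝ)) : EReal))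
        = (T : EReal) * ⨅ p ∈ T⁻¹ • V, ((I₁ (T⁻¹ • q) p : ℝ) : EReal) := by
      rw [iInf_scaled _ hT, mul_biInf _ hT]
      refine iInf_congr fun q' => iInf_congr fun _ => ?_
      rw [← EReal.coe_mul]
    rw [hV']
    calc (T : EReal) * UQ E P 1 (T⁻¹ • q) (T⁻¹ • V)
        ≤ (T : EReal) * -(⨅ p ∈ T⁻¹ • V, ((I₁ (T⁻¹ • q) p : ℝ) : EReal)) :=
          mul_le_mul_of_nonneg_left hup1 (EReal.coe_nonneg.2 hT.le)
      _ = -(((T : EReal)) * ⨅ p ∈ T⁻¹ • V, ((I₁ (T⁻¹ • q) p : ℝ) : EReal)) := by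
          rw [mul_comm ((T : EReal)) (-(⨅ p ∈ T⁻¹ • V, ((I₁ (T⁻¹ • q) p : ℝ) : EReal))),
            EReal.neg_mul, mul_comm]

end Aux

/-- If `Z^ε(T)` satisfies the weak LDP with rate functions `I_T`,
then the quasipotential satisfies `I(q,q') = inf_{T>0} T · I_1(q/T, q'/T)`. -/
theorem quasipot_repr
    {d : ℕ} (M : MarkovSetup d) (I : ℝ → Sp d → Sp d → ℝ)
    (h : ∀ T : ℝ, 0 < T → WeakLDP M.E M.P T (I T)) :
    ∀ q q' : Sp d, quasipot I q q' =
      ⨅ T : {T : ℝ // 0 < T}, T.1 * I 1 (T.1⁻¹ • q) (T.1⁻¹ • q') := by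
  intro q q'
  have hA : ∀ (q : Sp d) (δ : ℝ), 0 < δ →
      ∀ᶠ ε in 𝓝[>] (0:ℝ), (nearScaled M.E ε q δ).Nonempty := lemA M I h
  have key : ∀ T : ℝ, 0 < T → ∀ a b : Sp d,
      I T a b = T * I 1 (T⁻¹ • a) (T⁻¹ • b) := by
    intro T hT a b
    have hB : WeakLDP M.E M.P T (fun a b => T * I 1 (T⁻¹ • a) (T⁻¹ • b)) :=
      lemB (h 1 one_pos) hT
    exact le_antisymm (uniq M hT (h T hT) hB hA a b) (uniq M hT hB (h T hT) hA a b)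
  rw [quasipot]
  exact iInf_congr fun T => key T.1 T.2 q q'

end GreenLDP
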